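/- For every r ∈ ℕ there exist real numbers α_1, …, α_r > 0 such that for every c ∈ [−1, 1] and every centered bivariate Gaussian vector (X, Y) with Var(X) = Var(Y) = 1 and Cov(X, Y) = c, one has Cov(X^{2r}, Y^{2r}) = Σ_{i=1}^r α_i c^{2i}. -/

import Mathlib

open MeasureTheory ProbabilityTheory

noncomputable section

namespace TGP

/-- Covariance of two real random variables. -/
def cov {Ω : Type*} [MeasurableSpace Ω] (μ : Measure Ω) (f g : Ω → ℝ) : ℝ :=
  (∫ ω, f ω * g ω ∂μ) - (∫ ω, f ω ∂μ) * (∫ ω, g ω ∂μ)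

end TGP

open Real Filter
open scoped NNReal ENNReal

namespace TGPaux

/-- `J n = ∫ x^n e^{-x²/2}` over ℝ. -/
def J (n : ℕ) : ℝ := ∫ x : ℝ, x ^ n * Real.exp (-x ^ 2 / 2)

lemma fun_eq (n : ℕ) : (fun x : ℝ => x ^ (n : ℝ) * Real.exp (-(1/2 : ℝ) * x ^ 2))
    = fun x : ℝ => x ^ n * Real.exp (-x ^ 2 / 2) := by
  ext x
  have h : -(1/2 : ℝ) * x ^ 2 = -x ^ 2 / 2 := by ring
  rw [Real.rpow_natCast, h]

lemma integrable_J (n : ℕ) : Integrable (fun x : ℝ => x ^ n * Real.exp (-x ^ 2 / 2)) := by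
  have h := integrable_rpow_mul_exp_neg_mul_sq (b := (1/2 : ℝ)) (by norm_num)
    (s := (n : ℝ)) (by exact lt_of_lt_of_le neg_one_lt_zero (Nat.cast_nonneg n))
  rwa [fun_eq] at h

lemma tendsto_J_atTop (n : ℕ) :
    Tendsto (fun x : ℝ => x ^ n * Real.exp (-x ^ 2 / 2)) atTop (nhds 0) := by
  have h := rpow_mul_exp_neg_mul_sq_isLittleO_exp_neg (b := (1/2 : ℝ)) (by norm_num) (n : ℝ)
  rw [fun_eq] at h
  refine h.isBigO.trans_tendsto ?_
  have h2 : Tendsto (fun x : ℝ => (1/2 : ℝ) * x) atTop atTop :=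
    (tendsto_const_mul_atTop_of_pos (by norm_num)).mpr tendsto_id
  have h3 := tendsto_exp_neg_atTop_nhds_zero.comp h2
  refine h3.congr fun x => ?_
  simp only [Function.comp]
  ring_nf

lemma tendsto_J_atBot (n : ℕ) :
    Tendsto (fun x : ℝ => x ^ n * Real.exp (-x ^ 2 / 2)) atBot (nhds 0) := by
  have h := (tendsto_J_atTop n).const_mul ((-1 : ℝ) ^ n)
  rw [mul_zero] at h
  have h2 := h.comp tendsto_neg_atBot_atTop
  refine h2.congr fun x => ?_
  show (-1 : ℝ) ^ n * ((-x) ^ n * Real.exp (-(-x) ^ 2 / 2)) = x ^ n * Real.exp (-x ^ 2 / 2)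
  have hx : ((-1:ℝ)) ^ n * (-x) ^ n = x ^ n := by
    rw [← mul_pow]; norm_num
  rw [neg_sq, ← mul_assoc, hx]

lemma hasDerivAt_aux (n : ℕ) (x : ℝ) :
    HasDerivAt (fun x : ℝ => x ^ (n + 1) * Real.exp (-x ^ 2 / 2))
      ((n + 1 : ℝ) * (x ^ n * Real.exp (-x ^ 2 / 2)) - x ^ (n + 2) * Real.exp (-x ^ 2 / 2)) x := by
  have h1 : HasDerivAt (fun x : ℝ => x ^ (n + 1)) ((n + 1 : ℝ) * x ^ n) x := by
    simpa using hasDerivAt_pow (n + 1) x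
  have hx : HasDerivAt (fun x : ℝ => -x ^ 2 / 2) (-x) x := by
    have := (hasDerivAt_pow 2 x).neg.div_const 2
    exact this.congr_deriv (by push_cast; ring)
  have h2 : HasDerivAt (fun x : ℝ => Real.exp (-x ^ 2 / 2)) (Real.exp (-x ^ 2 / 2) * (-x)) x :=
    hx.exp
  exact (h1.mul h2).congr_deriv (by ring)

lemma J_rec (n : ℕ) : J (n + 2) = (n + 1 : ℝ) * J n := by
  set g : ℝ → ℝ := fun x =>
    (n + 1 : ℝ) * (x ^ n * Real.exp (-x ^ 2 / 2)) - x ^ (n + 2) * Real.exp (-x ^ 2 / 2) with hg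
  have hint : Integrable g := ((integrable_J n).const_mul _).sub (integrable_J (n + 2))
  have hIoi : ∫ x in Set.Ioi (0 : ℝ), g x
      = 0 - (0 : ℝ) ^ (n + 1) * Real.exp (-(0:ℝ) ^ 2 / 2) :=
    integral_Ioi_of_hasDerivAt_of_tendsto' (fun x _ => hasDerivAt_aux n x)
      hint.integrableOn (tendsto_J_atTop (n + 1))
  have hIic : ∫ x in Set.Iic (0 : ℝ), g x
      = (0 : ℝ) ^ (n + 1) * Real.exp (-(0:ℝ) ^ 2 / 2) - 0 :=
    integral_Iic_of_hasDerivAt_of_tendsto' (fun x _ => hasDerivAt_aux n x)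
      hint.integrableOn (tendsto_J_atBot (n + 1))
  have hsplit := intervalIntegral.integral_Iic_add_Ioi (μ := volume) (b := (0:ℝ))
    hint.integrableOn hint.integrableOn
  have hzero : ∫ x : ℝ, g x = 0 := by
    rw [← hsplit, hIoi, hIic]; ring
  have hsub : ∫ x : ℝ, g x
      = (n + 1 : ℝ) * J n - J (n + 2) := by
    rw [hg]
    rw [integral_sub ((integrable_J n).const_mul _) (integrable_J (n + 2))]
    rw [integral_const_mul]
    rfl
  rw [hsub] at hzero
  linarith

lemma J_zero : J 0 = Real.sqrt (2 * π) := by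
  unfold J
  simp only [pow_zero, one_mul]
  have h := integral_gaussian (1/2 : ℝ)
  rw [show π / (1/2 : ℝ) = 2 * π by ring] at h
  rw [← h]
  congr 1
  ext x
  congr 1
  ring

lemma J_one : J 1 = 0 := by
  have hder : ∀ x : ℝ, HasDerivAt (fun x : ℝ => -Real.exp (-x ^ 2 / 2))
      (x ^ 1 * Real.exp (-x ^ 2 / 2)) x := by
    intro x
    have hx : HasDerivAt (fun x : ℝ => -x ^ 2 / 2) (-x) x := by
      have := (hasDerivAt_pow 2 x).neg.div_const 2
      exact this.congr_deriv (by push_cast; ring)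
    exact hx.exp.neg.congr_deriv (by ring)
  have hint := integrable_J 1
  have htop : Tendsto (fun x : ℝ => -Real.exp (-x ^ 2 / 2)) atTop (nhds 0) := by
    have h := (tendsto_J_atTop 0).neg
    rw [neg_zero] at h
    refine h.congr fun x => ?_
    simp
  have hbot : Tendsto (fun x : ℝ => -Real.exp (-x ^ 2 / 2)) atBot (nhds 0) := by
    have h := (tendsto_J_atBot 0).neg
    rw [neg_zero] at h
    refine h.congr fun x => ?_
    simp
  have hIoi : ∫ x in Set.Ioi (0:ℝ), x ^ 1 * Real.exp (-x ^ 2 / 2)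
      = 0 - -Real.exp (-(0:ℝ) ^ 2 / 2) :=
    integral_Ioi_of_hasDerivAt_of_tendsto' (fun x _ => hder x) hint.integrableOn htop
  have hIic : ∫ x in Set.Iic (0:ℝ), x ^ 1 * Real.exp (-x ^ 2 / 2)
      = -Real.exp (-(0:ℝ) ^ 2 / 2) - 0 :=
    integral_Iic_of_hasDerivAt_of_tendsto' (fun x _ => hder x) hint.integrableOn hbot
  have hsplit := intervalIntegral.integral_Iic_add_Ioi (μ := volume) (b := (0:ℝ))
    hint.integrableOn hint.integrableOn
  unfold J
  rw [← hsplit, hIoi, hIic]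
  ring

/-- The even moments constant `M m = m! / (2^(m/2) (m/2)!)` in the form used below. -/
def M (m : ℕ) : ℝ := (Nat.factorial (2 * m) : ℝ) / (2 ^ m * Nat.factorial m)

lemma M_pos (m : ℕ) : 0 < M m := by
  unfold M
  positivity

lemma J_even (m : ℕ) : J (2 * m) = Real.sqrt (2 * π) * M m := by
  induction m with
  | zero => simp [M, J_zero]
  | succ k ih =>
    have h : 2 * (k + 1) = 2 * k + 2 := by ring
    rw [h, J_rec, ih]
    unfold M
    have h2 : Nat.factorial (2 * (k + 1)) = (2 * k + 2) * ((2 * k + 1) * Nat.factorial (2 * k)) := by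
      rw [show 2 * (k + 1) = (2 * k + 1) + 1 by ring, Nat.factorial_succ, Nat.factorial_succ]
    rw [h2]
    have h3 : Nat.factorial (k + 1) = (k + 1) * Nat.factorial k := Nat.factorial_succ k
    rw [h3]
    push_cast
    have hne1 : (2 : ℝ) ^ k ≠ 0 := by positivity
    have hne2 : (Nat.factorial k : ℝ) ≠ 0 := Nat.cast_ne_zero.mpr (Nat.factorial_ne_zero k)
    field_simp
    ring

lemma J_odd (m : ℕ) : J (2 * m + 1) = 0 := by
  induction m with
  | zero => simpa using J_one
  | succ k ih =>
    have h : 2 * (k + 1) + 1 = (2 * k + 1) + 2 := by ring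
    rw [h, J_rec, ih, mul_zero]


/-- moments of the centered gaussian -/
def Gm (n : ℕ) (v : NNReal) : ℝ := ∫ x, x ^ n ∂(gaussianReal 0 v)

lemma pdf_smul_eq (g : ℝ → ℝ) (x : ℝ) :
    Real.toNNReal (gaussianPDFReal 0 1 x) • g x
      = (Real.sqrt (2 * π))⁻¹ * (g x * Real.exp (-x ^ 2 / 2)) := by
  rw [NNReal.smul_def, Real.coe_toNNReal _ (gaussianPDFReal_nonneg 0 1 x)]
  unfold gaussianPDFReal
  push_cast
  rw [smul_eq_mul]
  simp only [mul_one, sub_zero]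
  ring

lemma integral_std (g : ℝ → ℝ) :
    ∫ x, g x ∂(gaussianReal 0 1)
      = (Real.sqrt (2 * π))⁻¹ * ∫ x : ℝ, g x * Real.exp (-x ^ 2 / 2) := by
  rw [gaussianReal_of_var_ne_zero 0 one_ne_zero, gaussianPDF_def]
  have h : (fun x => ENNReal.ofReal (gaussianPDFReal 0 1 x))
      = fun x => ((Real.toNNReal (gaussianPDFReal 0 1 x) : ℝ≥0) : ℝ≥0∞) := rfl
  rw [h, integral_withDensity_eq_integral_smul
    ((measurable_gaussianPDFReal 0 1).real_toNNReal) g]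
  rw [← integral_const_mul]
  congr 1
  ext x
  exact pdf_smul_eq g x

lemma integrable_pow_std (n : ℕ) :
    Integrable (fun x => x ^ n) (gaussianReal 0 1) := by
  rw [gaussianReal_of_var_ne_zero 0 one_ne_zero, gaussianPDF_def]
  have h : (fun x => ENNReal.ofReal (gaussianPDFReal 0 1 x))
      = fun x => ((Real.toNNReal (gaussianPDFReal 0 1 x) : ℝ≥0) : ℝ≥0∞) := rfl
  rw [h, integrable_withDensity_iff_integrable_smul
    ((measurable_gaussianPDFReal 0 1).real_toNNReal)]
  have h2 := (integrable_J n).const_mul (Real.sqrt (2 * π))⁻¹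
  refine h2.congr (Eventually.of_forall fun x => ?_)
  show (Real.sqrt (2 * π))⁻¹ * (x ^ n * Real.exp (-x ^ 2 / 2))
      = Real.toNNReal (gaussianPDFReal 0 1 x) • x ^ n
  exact (pdf_smul_eq (fun y => y ^ n) x).symm

lemma sqrt_two_pi_ne : Real.sqrt (2 * π) ≠ 0 := by
  refine ne_of_gt (Real.sqrt_pos.mpr ?_)
  positivity

lemma Gm_std (n : ℕ) : Gm n 1 = (Real.sqrt (2 * π))⁻¹ * J n := by
  rw [Gm, integral_std]
  rfl

lemma Gm_even_std (m : ℕ) : Gm (2 * m) 1 = M m := by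
  rw [Gm_std, J_even, ← mul_assoc, inv_mul_cancel₀ sqrt_two_pi_ne, one_mul]

lemma Gm_odd_std (m : ℕ) : Gm (2 * m + 1) 1 = 0 := by
  rw [Gm_std, J_odd, mul_zero]

lemma hmp (n : ℕ) : Measurable fun x : ℝ => x ^ n := by fun_prop

lemma gaussianReal_scale (v : NNReal) :
    gaussianReal 0 v = (gaussianReal 0 1).map (fun x => Real.sqrt v * x) := by
  have h := gaussianReal_map_const_mul (μ := 0) (v := 1) (Real.sqrt v)
  have h2 : (⟨(Real.sqrt v) ^ 2, sq_nonneg _⟩ : ℝ≥0) * 1 = v := by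
    ext
    push_cast
    rw [mul_one]
    exact Real.sq_sqrt v.coe_nonneg
  rw [mul_zero] at h
  rw [h]
  congr 1
  exact h2.symm

lemma integrable_pow_gauss (n : ℕ) (v : NNReal) :
    Integrable (fun x => x ^ n) (gaussianReal 0 v) := by
  rw [gaussianReal_scale]
  rw [integrable_map_measure ((hmp n)).aestronglyMeasurable
    (measurable_const_mul _).aemeasurable]
  have h := (integrable_pow_std n).const_mul ((Real.sqrt v) ^ n)
  refine h.congr (Eventually.of_forall fun x => ?_)
  simp only [Function.comp]
  rw [mul_pow]

lemma Gm_map (n : ℕ) (v : NNReal) :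
    Gm n v = (Real.sqrt v) ^ n * Gm n 1 := by
  rw [Gm, gaussianReal_scale,
    integral_map (measurable_const_mul _).aemeasurable
      ((hmp n)).aestronglyMeasurable]
  simp_rw [mul_pow]
  rw [integral_const_mul]
  rfl

lemma Gm_even (m : ℕ) (v : NNReal) : Gm (2 * m) v = M m * (v : ℝ) ^ m := by
  rw [Gm_map, Gm_even_std, pow_mul, Real.sq_sqrt v.coe_nonneg, mul_comm]

lemma Gm_odd (m : ℕ) (v : NNReal) : Gm (2 * m + 1) v = 0 := by
  rw [Gm_map, Gm_odd_std, mul_zero]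


variable {Ω : Type} [MeasurableSpace Ω] {μ : Measure Ω} [IsProbabilityMeasure μ]

lemma aemeasurable_of_gauss {Z : Ω → ℝ} {v : NNReal}
    (hZ : Measure.map Z μ = gaussianReal 0 v) : AEMeasurable Z μ :=
  aemeasurable_of_map_neZero (by rw [hZ]; infer_instance)

lemma integrable_pow_of_gauss {Z : Ω → ℝ} {v : NNReal}
    (hZ : Measure.map Z μ = gaussianReal 0 v) (n : ℕ) :
    Integrable (fun ω => Z ω ^ n) μ := by
  have h := integrable_pow_gauss n v
  rw [← hZ] at h
  exact (integrable_map_measure (hmp n).aestronglyMeasurable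
    (aemeasurable_of_gauss hZ)).mp h

lemma integral_pow_of_gauss {Z : Ω → ℝ} {v : NNReal}
    (hZ : Measure.map Z μ = gaussianReal 0 v) (n : ℕ) :
    ∫ ω, Z ω ^ n ∂μ = Gm n v := by
  rw [Gm, ← hZ, integral_map (aemeasurable_of_gauss hZ) (hmp n).aestronglyMeasurable]

/-- mixed integrability -/
lemma integrable_mixed {X Y : Ω → ℝ} (hX : AEMeasurable X μ) (hY : AEMeasurable Y μ)
    (hXN : Integrable (fun ω => X ω ^ (N : ℕ)) μ) (hYN : Integrable (fun ω => Y ω ^ N) μ)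
    (k : ℕ) (hk : k ≤ N) :
    Integrable (fun ω => X ω ^ k * Y ω ^ (N - k)) μ := by
  have hbound : Integrable (fun ω => |X ω ^ N| + |Y ω ^ N|) μ := hXN.abs.add hYN.abs
  refine hbound.mono' ?_ (Eventually.of_forall fun ω => ?_)
  · exact ((hX.pow_const k).mul (hY.pow_const (N - k))).aestronglyMeasurable
  · rw [Real.norm_eq_abs, abs_mul, abs_pow, abs_pow, abs_pow, abs_pow]
    rcases le_total (|X ω|) (|Y ω|) with h | h
    · calc |X ω| ^ k * |Y ω| ^ (N - k) ≤ |Y ω| ^ k * |Y ω| ^ (N - k) := by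
            gcongr
          _ = |Y ω| ^ N := by rw [← pow_add]; congr 1; omega
          _ ≤ |X ω| ^ N + |Y ω| ^ N := le_add_of_nonneg_left (by positivity)
    · calc |X ω| ^ k * |Y ω| ^ (N - k) ≤ |X ω| ^ k * |X ω| ^ (N - k) := by
            gcongr
          _ = |X ω| ^ N := by rw [← pow_add]; congr 1; omega
          _ ≤ |X ω| ^ N + |Y ω| ^ N := le_add_of_nonneg_right (by positivity)

/-- Sum over even indices. -/
lemma sum_range_even (n : ℕ) (f : ℕ → ℝ) (hf : ∀ q, ¬ 2 ∣ q → f q = 0) :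
    ∑ q ∈ Finset.range (2 * n + 1), f q = ∑ u ∈ Finset.range (n + 1), f (2 * u) := by
  induction n with
  | zero => simp
  | succ k ih =>
    have h1 : 2 * (k + 1) + 1 = (2 * k + 1) + 1 + 1 := by ring
    rw [h1, Finset.sum_range_succ, Finset.sum_range_succ, ih, hf (2 * k + 1) (by omega)]
    have h2 : 2 * k + 1 + 1 = 2 * (k + 1) := by ring
    rw [add_zero, h2]
    exact (Finset.sum_range_succ _ _).symm

open Polynomial in
lemma coeff_pow_sq_add_one (m k : ℕ) :
    ((X ^ 2 + 1 : ℝ[X]) ^ m).coeff k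
      = if 2 ∣ k ∧ k ≤ 2 * m then (m.choose (k / 2) : ℝ) else 0 := by
  rw [add_pow]
  simp only [one_pow, mul_one]
  rw [Polynomial.finset_sum_coeff]
  have hterm : ∀ p ∈ Finset.range (m + 1),
      ((X ^ 2 : ℝ[X]) ^ p * (m.choose p : ℝ[X])).coeff k
        = if k = 2 * p then (m.choose p : ℝ) else 0 := by
    intro p _
    rw [← pow_mul, mul_comm ((X : ℝ[X]) ^ (2 * p)) _, Polynomial.coeff_mul_X_pow']
    by_cases h : k = 2 * p
    · subst h
      simp
    · by_cases h2 : 2 * p ≤ k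
      · rw [if_pos h2, if_neg h]
        rw [Polynomial.coeff_natCast_ite]
        simp only [Nat.cast_ite, Nat.cast_zero]
        rw [if_neg (by omega)]
      · rw [if_neg h2, if_neg h]
  rw [Finset.sum_congr rfl hterm]
  by_cases hk : 2 ∣ k ∧ k ≤ 2 * m
  · rw [if_pos hk]
    obtain ⟨⟨s, hs⟩, hle⟩ := hk
    subst hs
    rw [Finset.sum_eq_single s]
    · rw [if_pos rfl]
      have hss : 2 * s / 2 = s := by omega
      rw [hss]
    · intro b _ hb
      rw [if_neg (by omega)]
    · intro hs'
      exfalso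
      exact hs' (Finset.mem_range.mpr (by omega))
  · rw [if_neg hk]
    refine Finset.sum_eq_zero fun p hp => ?_
    rw [Finset.mem_range] at hp
    rw [if_neg ?_]
    intro h
    exact hk ⟨⟨p, h⟩, by omega⟩


lemma M_one : M 1 = 1 := by norm_num [M, Nat.factorial]

open Polynomial in
/-- coefficient of `X^{2r}` in `(X² + 2c·X + 1)^{2r}`. -/
lemma coeff_main (r : ℕ) (c : ℝ) :
    ((X ^ 2 + C (2 * c) * X + 1 : ℝ[X]) ^ (2 * r)).coeff (2 * r)
      = ∑ u ∈ Finset.range (r + 1),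
          ((2 * r).choose (2 * u) : ℝ) * ((2 * (r - u)).choose (r - u) : ℝ)
            * (2 * c) ^ (2 * u) := by
  have hp : (X ^ 2 + C (2 * c) * X + 1 : ℝ[X]) = (C (2 * c) * X) + (X ^ 2 + 1) := by ring
  rw [hp, add_pow, Polynomial.finset_sum_coeff]
  set f : ℕ → ℝ := fun q =>
    if 2 ∣ (2 * r - q) ∧ q ≤ 2 * r then
      ((2 * r).choose q : ℝ) * (2 * c) ^ q * ((2 * r - q).choose ((2 * r - q) / 2) : ℝ)
    else 0 with hf
  have hterm : ∀ q ∈ Finset.range (2 * r + 1),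
      (((C (2 * c) * X) ^ q * (X ^ 2 + 1 : ℝ[X]) ^ (2 * r - q)
          * ((2 * r).choose q : ℝ[X])).coeff (2 * r)) = f q := by
    intro q hq
    rw [Finset.mem_range] at hq
    have hq' : q ≤ 2 * r := by omega
    have h1 : ((C (2 * c) * X) ^ q * (X ^ 2 + 1 : ℝ[X]) ^ (2 * r - q)
          * ((2 * r).choose q : ℝ[X]))
        = C ((2 * c) ^ q * ((2 * r).choose q : ℝ)) * ((X ^ 2 + 1 : ℝ[X]) ^ (2 * r - q)) * X ^ q := by
      rw [mul_pow, ← Polynomial.C_pow, ← Polynomial.C_eq_natCast, Polynomial.C_mul]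
      ring
    rw [h1, Polynomial.coeff_mul_X_pow', Polynomial.coeff_C_mul, coeff_pow_sq_add_one]
    by_cases hdvd : 2 ∣ (2 * r - q)
    · have hcond : (2 * r - q) ≤ 2 * (2 * r - q) := by omega
      rw [if_pos hq', if_pos ⟨hdvd, hcond⟩]
      simp only [hf]
      rw [if_pos ⟨hdvd, hq'⟩]
      ring
    · rw [if_pos hq', if_neg (fun h => hdvd h.1), mul_zero]
      simp only [hf]
      rw [if_neg (fun h => hdvd h.1)]
  rw [Finset.sum_congr rfl hterm]
  rw [sum_range_even r f (fun q hq => by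
    simp only [hf]
    by_cases hq2 : q ≤ 2 * r
    · rw [if_neg]; rintro ⟨h1, h2⟩; exact hq (by omega)
    · rw [if_neg]; rintro ⟨h1, h2⟩; exact hq2 h2)]
  refine Finset.sum_congr rfl fun u hu => ?_
  rw [Finset.mem_range] at hu
  simp only [hf]
  have h2u : 2 * u ≤ 2 * r := by omega
  rw [if_pos ⟨⟨r - u, by omega⟩, h2u⟩]
  have e1 : 2 * r - 2 * u = 2 * (r - u) := by omega
  have e2 : 2 * (r - u) / 2 = r - u := by omega
  rw [e1, e2]
  ring


end TGPaux

open TGPaux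

/-- For every `r ≥ 1` there exist `α_1, …, α_r > 0` such that for every
`c ∈ [−1,1]` and every centered bivariate Gaussian vector `(X, Y)` with unit variances and
`Cov(X, Y) = c`, one has `Cov(X^{2r}, Y^{2r}) = Σ_{i=1}^r α_i c^{2i}`. -/
theorem statement2 (r : ℕ) (hr : 0 < r) :
    ∃ α : Fin r → ℝ, (∀ i, 0 < α i) ∧
      ∀ (Ω : Type) (_ : MeasurableSpace Ω) (μ : Measure Ω) (_ : IsProbabilityMeasure μ)
        (X Y : Ω → ℝ) (c : ℝ), c ∈ Set.Icc (-1 : ℝ) 1 →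
        (∀ a b : ℝ, ∃ v : NNReal,
          Measure.map (fun ω => a * X ω + b * Y ω) μ = gaussianReal 0 v) →
        variance X μ = 1 → variance Y μ = 1 → TGP.cov μ X Y = c →
        TGP.cov μ (fun ω => X ω ^ (2 * r)) (fun ω => Y ω ^ (2 * r))
          = ∑ i : Fin r, α i * c ^ (2 * ((i : ℕ) + 1)) := by
  classical
  set CN : ℝ := (((2 * (2 * r)).choose (2 * r) : ℕ) : ℝ) with hCNdef
  have hCNpos : (0 : ℝ) < CN := by
    rw [hCNdef]
    exact_mod_cast Nat.choose_pos (by omega)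
  refine ⟨fun i => M (2 * r) * (((2 * r).choose (2 * ((i : ℕ) + 1)) : ℕ) : ℝ)
      * (((2 * (r - ((i : ℕ) + 1))).choose (r - ((i : ℕ) + 1)) : ℕ) : ℝ)
      * 4 ^ ((i : ℕ) + 1) / CN, fun i => ?_, ?_⟩
  · have hi := i.isLt
    have h1 : (0 : ℝ) < (((2 * r).choose (2 * ((i : ℕ) + 1)) : ℕ) : ℝ) := by
      exact_mod_cast Nat.choose_pos (by omega)
    have h2 : (0 : ℝ) < (((2 * (r - ((i : ℕ) + 1))).choose (r - ((i : ℕ) + 1)) : ℕ) : ℝ) := by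
      exact_mod_cast Nat.choose_pos (by omega)
    have h3 := M_pos (2 * r)
    positivity
  intro Ω mΩ μ hPM X Y c _hc h hvX hvY hcov
  -- marginal laws
  obtain ⟨vX, hmX⟩ := h 1 0
  obtain ⟨vY, hmY⟩ := h 0 1
  simp only [one_mul, zero_mul, add_zero] at hmX
  simp only [zero_mul, one_mul, zero_add] at hmY
  have hXae : AEMeasurable X μ := aemeasurable_of_gauss hmX
  have hYae : AEMeasurable Y μ := aemeasurable_of_gauss hmY
  have hXint : ∀ n, Integrable (fun ω => X ω ^ n) μ := integrable_pow_of_gauss hmX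
  have hYint : ∀ n, Integrable (fun ω => Y ω ^ n) μ := integrable_pow_of_gauss hmY
  have hGm1 : ∀ v : NNReal, Gm 1 v = 0 := fun v => by simpa using Gm_odd 0 v
  have hGm2 : ∀ v : NNReal, Gm 2 v = (v : ℝ) := fun v => by
    have h2 := Gm_even 1 v
    rw [M_one] at h2
    simpa using h2
  have hX1 : ∫ ω, X ω ∂μ = 0 := by
    have h' := integral_pow_of_gauss hmX 1
    simp only [pow_one] at h'
    rw [h', hGm1]
  have hY1 : ∫ ω, Y ω ∂μ = 0 := by
    have h' := integral_pow_of_gauss hmY 1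
    simp only [pow_one] at h'
    rw [h', hGm1]
  have hX2 : ∫ ω, X ω ^ 2 ∂μ = (vX : ℝ) := by rw [integral_pow_of_gauss hmX 2, hGm2]
  have hY2 : ∫ ω, Y ω ^ 2 ∂μ = (vY : ℝ) := by rw [integral_pow_of_gauss hmY 2, hGm2]
  have hvX1 : (vX : ℝ) = 1 := by
    have hmem : MemLp X 2 μ :=
      (memLp_two_iff_integrable_sq hXae.aestronglyMeasurable).mpr (hXint 2)
    have hvar := variance_eq_sub hmem
    rw [hvX] at hvar
    simp only [Pi.pow_apply] at hvar
    rw [hX2, hX1] at hvar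
    simpa using hvar.symm
  have hvY1 : (vY : ℝ) = 1 := by
    have hmem : MemLp Y 2 μ :=
      (memLp_two_iff_integrable_sq hYae.aestronglyMeasurable).mpr (hYint 2)
    have hvar := variance_eq_sub hmem
    rw [hvY] at hvar
    simp only [Pi.pow_apply] at hvar
    rw [hY2, hY1] at hvar
    simpa using hvar.symm
  have hXYint : Integrable (fun ω => X ω * Y ω) μ := by
    have h2 := integrable_mixed (N := 2) hXae hYae (hXint 2) (hYint 2) 1 (by omega)
    simpa using h2
  have hXY : ∫ ω, X ω * Y ω ∂μ = c := by
    simp only [TGP.cov] at hcov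
    rw [hX1, zero_mul, sub_zero] at hcov
    exact hcov
  -- main moment identity for each a
  set N := 2 * (2 * r) with hN
  set E : ℕ → ℝ := fun k => ∫ ω, X ω ^ k * Y ω ^ (N - k) ∂μ with hE
  have hmixed : ∀ k, Integrable (fun ω => X ω ^ k * Y ω ^ (N - k)) μ := by
    intro k
    by_cases hk : k ≤ N
    · exact integrable_mixed hXae hYae (hXint N) (hYint N) k hk
    · have hNk : N - k = 0 := by omega
      rw [hNk]
      simpa using hXint k
  have key : ∀ a : ℝ, ∑ k ∈ Finset.range (N + 1), E k * ((N.choose k : ℝ) * a ^ k)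
      = M (2 * r) * (a ^ 2 + 2 * c * a + 1) ^ (2 * r) := by
    intro a
    obtain ⟨v, hv⟩ := h a 1
    simp only [one_mul] at hv
    have hsq : ∫ ω, (a * X ω + Y ω) ^ 2 ∂μ = (v : ℝ) := by
      rw [integral_pow_of_gauss hv 2, hGm2]
    have hexp2 : (fun ω => (a * X ω + Y ω) ^ 2)
        = fun ω => a ^ 2 * X ω ^ 2 + ((2 * a) * (X ω * Y ω) + Y ω ^ 2) := by
      ext ω; ring
    have hg3 : Integrable (fun ω => 2 * a * (X ω * Y ω)) μ := hXYint.const_mul (2 * a)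
    have hg2 : Integrable (fun ω => 2 * a * (X ω * Y ω) + Y ω ^ 2) μ := hg3.add (hYint 2)
    have hg1 : Integrable (fun ω => a ^ 2 * X ω ^ 2) μ := (hXint 2).const_mul (a ^ 2)
    rw [hexp2, integral_add hg1 hg2, integral_add hg3 (hYint 2), integral_const_mul,
      integral_const_mul, hX2, hY2, hXY] at hsq
    have hv2 : (v : ℝ) = a ^ 2 + 2 * c * a + 1 := by
      rw [← hsq, hvX1, hvY1]; ring
    have hmom : ∫ ω, (a * X ω + Y ω) ^ N ∂μ
        = M (2 * r) * (a ^ 2 + 2 * c * a + 1) ^ (2 * r) := by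
      rw [integral_pow_of_gauss hv N, hN, Gm_even (2 * r) v, hv2]
    have hexp : ∀ ω, (a * X ω + Y ω) ^ N
        = ∑ k ∈ Finset.range (N + 1),
            (X ω ^ k * Y ω ^ (N - k)) * ((N.choose k : ℝ) * a ^ k) := by
      intro ω
      rw [add_pow]
      refine Finset.sum_congr rfl fun k hk => ?_
      rw [mul_pow]
      ring
    have hsum : ∫ ω, (a * X ω + Y ω) ^ N ∂μ
        = ∑ k ∈ Finset.range (N + 1), E k * ((N.choose k : ℝ) * a ^ k) := by
      simp only [hexp]
      rw [integral_finset_sum _ (fun k _ => (hmixed k).mul_const _)]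
      refine Finset.sum_congr rfl fun k hk => ?_
      rw [integral_mul_const, hE]
    rw [← hsum, hmom]
  -- polynomial identification
  have hpoly : (∑ k ∈ Finset.range (N + 1),
        Polynomial.C (E k * (N.choose k : ℝ)) * Polynomial.X ^ k : Polynomial ℝ)
      = Polynomial.C (M (2 * r))
        * (Polynomial.X ^ 2 + Polynomial.C (2 * c) * Polynomial.X + 1) ^ (2 * r) := by
    apply Polynomial.funext
    intro a
    rw [Polynomial.eval_finset_sum]
    simp only [Polynomial.eval_mul, Polynomial.eval_C, Polynomial.eval_pow,
      Polynomial.eval_add, Polynomial.eval_X, Polynomial.eval_one]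
    have hk := key a
    calc ∑ k ∈ Finset.range (N + 1), E k * (N.choose k : ℝ) * a ^ k
        = ∑ k ∈ Finset.range (N + 1), E k * ((N.choose k : ℝ) * a ^ k) := by
          refine Finset.sum_congr rfl fun k _ => by ring
      _ = M (2 * r) * (a ^ 2 + 2 * c * a + 1) ^ (2 * r) := hk
  have hco := congrArg (fun p : Polynomial ℝ => p.coeff (2 * r)) hpoly
  have hcoL : (∑ k ∈ Finset.range (N + 1),
        Polynomial.C (E k * (N.choose k : ℝ)) * Polynomial.X ^ k : Polynomial ℝ).coeff (2 * r)
      = E (2 * r) * CN := by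
    rw [Polynomial.finset_sum_coeff]
    rw [Finset.sum_eq_single (2 * r)]
    · rw [Polynomial.coeff_C_mul, Polynomial.coeff_X_pow, if_pos rfl, mul_one, hCNdef]
    · intro b _ hbne
      rw [Polynomial.coeff_C_mul, Polynomial.coeff_X_pow, if_neg (fun hh => hbne hh.symm),
        mul_zero]
    · intro hnot
      exact absurd (Finset.mem_range.mpr (by omega)) hnot
  have hcoR : (Polynomial.C (M (2 * r))
        * (Polynomial.X ^ 2 + Polynomial.C (2 * c) * Polynomial.X + 1) ^ (2 * r)
          : Polynomial ℝ).coeff (2 * r)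
      = M (2 * r) * ∑ u ∈ Finset.range (r + 1),
          ((2 * r).choose (2 * u) : ℝ) * ((2 * (r - u)).choose (r - u) : ℝ)
            * (2 * c) ^ (2 * u) := by
    rw [Polynomial.coeff_C_mul, coeff_main]
  rw [hcoL, hcoR] at hco
  -- moments of X^{2r}, Y^{2r}
  have hX2r : ∫ ω, X ω ^ (2 * r) ∂μ = M r := by
    rw [integral_pow_of_gauss hmX (2 * r), Gm_even r vX, hvX1, one_pow, mul_one]
  have hY2r : ∫ ω, Y ω ^ (2 * r) ∂μ = M r := by
    rw [integral_pow_of_gauss hmY (2 * r), Gm_even r vY, hvY1, one_pow, mul_one]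
  have hEE : TGP.cov μ (fun ω => X ω ^ (2 * r)) (fun ω => Y ω ^ (2 * r))
      = E (2 * r) - M r * M r := by
    have hNr : N - 2 * r = 2 * r := by omega
    simp only [TGP.cov, hE]
    rw [hX2r, hY2r, hNr]
  rw [hEE]
  -- factorial identities
  have hA : (((2 * r).factorial : ℕ) : ℝ) ≠ 0 := Nat.cast_ne_zero.mpr (Nat.factorial_ne_zero _)
  have hB : ((r.factorial : ℕ) : ℝ) ≠ 0 := Nat.cast_ne_zero.mpr (Nat.factorial_ne_zero _)
  have hchoose1 : CN * (((2 * r).factorial : ℕ) : ℝ) * (((2 * r).factorial : ℕ) : ℝ)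
      = (((2 * (2 * r)).factorial : ℕ) : ℝ) := by
    have hh := Nat.choose_mul_factorial_mul_factorial (show 2 * r ≤ 2 * (2 * r) by omega)
    have h2 : 2 * (2 * r) - 2 * r = 2 * r := by omega
    rw [h2] at hh
    rw [hCNdef]
    exact_mod_cast hh
  have hchoose2 : (((2 * r).choose r : ℕ) : ℝ) * ((r.factorial : ℕ) : ℝ) * ((r.factorial : ℕ) : ℝ)
      = (((2 * r).factorial : ℕ) : ℝ) := by
    have hh := Nat.choose_mul_factorial_mul_factorial (show r ≤ 2 * r by omega)
    have h2 : 2 * r - r = r := by omega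
    rw [h2] at hh
    exact_mod_cast hh
  have hCN' : CN = (((2 * (2 * r)).factorial : ℕ) : ℝ)
      / ((((2 * r).factorial : ℕ) : ℝ) * (((2 * r).factorial : ℕ) : ℝ)) := by
    rw [eq_div_iff (mul_ne_zero hA hA), ← hchoose1]
    ring
  have hC2' : (((2 * r).choose r : ℕ) : ℝ)
      = (((2 * r).factorial : ℕ) : ℝ) / (((r.factorial : ℕ) : ℝ) * ((r.factorial : ℕ) : ℝ)) := by
    rw [eq_div_iff (mul_ne_zero hB hB), ← hchoose2]
    ring
  have hstar : M r * M r * CN = M (2 * r) * (((2 * r).choose r : ℕ) : ℝ) := by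
    rw [hCN', hC2']
    unfold M
    rw [show (2 : ℝ) ^ (2 * r) = 2 ^ r * 2 ^ r by rw [two_mul, pow_add]]
    field_simp
  -- peel off the u = 0 term
  rw [Finset.sum_range_succ'] at hco
  have hT0 : ((2 * r).choose (2 * 0) : ℝ) * ((2 * (r - 0)).choose (r - 0) : ℝ)
      * (2 * c) ^ (2 * 0) = (((2 * r).choose r : ℕ) : ℝ) := by
    norm_num
  rw [hT0] at hco
  -- final computation
  apply mul_right_cancel₀ (ne_of_gt hCNpos)
  have hgoalL : (E (2 * r) - M r * M r) * CN
      = M (2 * r) * ∑ i ∈ Finset.range r,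
          ((2 * r).choose (2 * (i + 1)) : ℝ) * ((2 * (r - (i + 1))).choose (r - (i + 1)) : ℝ)
            * (2 * c) ^ (2 * (i + 1)) := by
    have : (E (2 * r) - M r * M r) * CN = E (2 * r) * CN - M r * M r * CN := by ring
    rw [this, hco, hstar]
    rw [mul_add]
    ring
  rw [hgoalL]
  rw [Fin.sum_univ_eq_sum_range (fun i => M (2 * r) * (((2 * r).choose (2 * (i + 1)) : ℕ) : ℝ)
      * (((2 * (r - (i + 1))).choose (r - (i + 1)) : ℕ) : ℝ) * 4 ^ (i + 1) / CN
        * c ^ (2 * (i + 1))) r]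
  rw [Finset.mul_sum, Finset.sum_mul]
  refine Finset.sum_congr rfl fun i hi => ?_
  have hpow : (2 * c) ^ (2 * (i + 1)) = 4 ^ (i + 1) * c ^ (2 * (i + 1)) := by
    rw [pow_mul, show (2 * c) ^ 2 = 4 * c ^ 2 by ring, mul_pow, ← pow_mul]
  rw [hpow]
  field_simp
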